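/- arXiv:1301.3127 — 9 statements merged into one kernel-verified Lean document; each statement's English description precedes it below -/
import Mathlib

section
/- Let g be a guard and write g = g_L ∧ g_U, where g_L is the conjunction of the lower-bound atomic constraints of g and g_U is the conjunction of the upper-bound atomic constraints of g, and let R ⊆ X. If W₁ is a time-elapsed set of valuations, then Post_{g,R}(W₁) = Post_{g_U,R}(Post_{g_L,∅}(W₁)). -/
/-! Common framework: clocks, valuations, guards, zones, timed automata,
LU-bounds and LU-abstraction, following the paper's definitions. -/

abbrev Val (X : Type*) := X → NNReal

/-- Time delay: `v + δ`. -/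
def delay {X : Type*} (v : Val X) (δ : NNReal) : Val X := fun x => v x + δ

open Classical in
/-- Reset `[R]v`. -/
noncomputable def resetV {X : Type*} (R : Set X) (v : Val X) : Val X :=
  fun x => if x ∈ R then 0 else v x

/-- The valuation `0̄`. -/
def zeroVal (X : Type*) : Val X := fun _ => 0

/-- Comparison operators for atomic clock constraints. -/
inductive Cmp where
  | lt | le | eq | ge | gt

/-- Satisfaction of `a # c`. -/
def Cmp.sat : Cmp → NNReal → ℕ → Prop
  | .lt, a, c => a < (c : NNReal)
  | .le, a, c => a ≤ (c : NNReal)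
  | .eq, a, c => a = (c : NNReal)
  | .ge, a, c => (c : NNReal) ≤ a
  | .gt, a, c => (c : NNReal) < a

/-- An atomic clock constraint `x # c`. -/
structure Atomic (X : Type*) where
  clock : X
  cmp : Cmp
  bound : ℕ

/-- A guard is a finite conjunction of atomic constraints. -/
abbrev Guard (X : Type*) := List (Atomic X)

/-- `v ⊨ g`. -/
def satG {X : Type*} (v : Val X) (g : Guard X) : Prop :=
  ∀ a ∈ g, a.cmp.sat (v a.clock) a.bound

/-- Lower-bound constraints: `x > c` or `x ≥ c`. -/
def Atomic.isLower {X : Type*} (a : Atomic X) : Prop := a.cmp = Cmp.gt ∨ a.cmp = Cmp.ge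

/-- Upper-bound constraints: `x < c` or `x ≤ c`. -/
def Atomic.isUpper {X : Type*} (a : Atomic X) : Prop := a.cmp = Cmp.lt ∨ a.cmp = Cmp.le

/-- A set `W` of valuations is time-elapsed. -/
def TimeElapsed {X : Type*} (W : Set (Val X)) : Prop :=
  ∀ v ∈ W, ∀ δ : NNReal, delay v δ ∈ W

/-- `Post_{g,R}(W) = { [R]v + δ | v ∈ W, v ⊨ g, δ ∈ ℝ≥0 }`. -/
def post {X : Type*} (g : Guard X) (R : Set X) (W : Set (Val X)) : Set (Val X) :=
  { w | ∃ v ∈ W, satG v g ∧ ∃ δ : NNReal, w = delay (resetV R v) δ }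

/-- LU-bounds take values in `ℕ ∪ {−∞}`. -/
abbrev Bnd := WithBot ℕ

/-- `b < r` where `b ∈ ℕ ∪ {−∞}` and `r ∈ ℝ≥0` (every real is greater than `−∞`). -/
def Bnd.ltVal (b : Bnd) (r : NNReal) : Prop :=
  ∀ n : ℕ, b = (n : Bnd) → (n : NNReal) < r

/-- The LU-preorder `v ⊑_LU v'`. -/
def luLe {X : Type*} (L U : X → Bnd) (v v' : Val X) : Prop :=
  ∀ x, (v' x < v x → Bnd.ltVal (L x) (v' x)) ∧ (v x < v' x → Bnd.ltVal (U x) (v x))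

/-- `a_LU(W)`. -/
def aLU {X : Type*} (L U : X → Bnd) (W : Set (Val X)) : Set (Val X) :=
  { v | ∃ v' ∈ W, luLe L U v v' }

/-- A timed automaton `(Q, q0, X, T, Acc)` (finiteness of `Q`, `X`, `trans`
is imposed as hypotheses of the theorems). -/
structure TA (Q X : Type*) where
  q0 : Q
  trans : Set (Q × Guard X × Set X × Q)
  acc : Set Q

/-- One delay or action transition between configurations. -/
def step {Q X : Type*} (A : TA Q X) (c c' : Q × Val X) : Prop :=
  (c'.1 = c.1 ∧ ∃ δ : NNReal, c'.2 = delay c.2 δ) ∨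
  (∃ g R, (c.1, g, R, c'.1) ∈ A.trans ∧ satG c.2 g ∧ c'.2 = resetV R c.2)

/-- There is a run (finite alternating sequence of delay and action transitions)
from `c` to `c'`. -/
def Reach {Q X : Type*} (A : TA Q X) : (Q × Val X) → (Q × Val X) → Prop :=
  Relation.ReflTransGen (step A)

/-- Symbolic transition `(q,W) ⇒^t (q', Post_t(W))`, union over all `t ∈ T`. -/
def symbStep {Q X : Type*} (A : TA Q X) (p p' : Q × Set (Val X)) : Prop :=
  ∃ g R, (p.1, g, R, p'.1) ∈ A.trans ∧ p'.2 = post g R p.2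

/-- The initial zone `Z0 = { 0̄ + δ | δ ∈ ℝ≥0 }`. -/
def Z0 (X : Type*) : Set (Val X) := { v | ∃ δ : NNReal, v = delay (zeroVal X) δ }

/-- Time-abstract simulation for `A`. -/
def IsTASim {Q X : Type*} (A : TA Q X) (S : (Q × Val X) → (Q × Val X) → Prop) : Prop :=
  (∀ c c', S c c' → c.1 = c'.1) ∧
  (∀ (q : Q) (v v' : Val X) (δ : NNReal) (g : Guard X) (R : Set X) (q1 : Q),
    S (q, v) (q, v') → (q, g, R, q1) ∈ A.trans → satG (delay v δ) g →
    ∃ δ' : NNReal, satG (delay v' δ') g ∧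
      S (q1, resetV R (delay v δ)) (q1, resetV R (delay v' δ')))

/-- Abstraction induced by a preorder `≼` on valuations. -/
def aAbs {X : Type*} (pre : Val X → Val X → Prop) (W : Set (Val X)) : Set (Val X) :=
  { v | ∃ v' ∈ W, pre v v' }

/-- Abstract transition `(q,W) ⇒_a (q', a(W'))` whenever `W = a(W)` and `(q,W) ⇒ (q',W')`. -/
def absStep {Q X : Type*} (A : TA Q X) (pre : Val X → Val X → Prop)
    (p p' : Q × Set (Val X)) : Prop :=
  p.2 = aAbs pre p.2 ∧ ∃ W', symbStep A p (p'.1, W') ∧ p'.2 = aAbs pre W'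

/-- If `W₁` is time-elapsed and `g` splits as the conjunction of its
lower-bound part `gL` and its upper-bound part `gU`, then
`Post_{g,R}(W₁) = Post_{gU,R}(Post_{gL,∅}(W₁))`. -/
theorem stmt_0 {X : Type*} [Finite X] (g gL gU : Guard X)
    (hgL : ∀ a ∈ gL, a.isLower) (hgU : ∀ a ∈ gU, a.isUpper)
    (hsplit : ∀ v : Val X, satG v g ↔ satG v gL ∧ satG v gU)
    (R : Set X) (W₁ : Set (Val X)) (hW₁ : TimeElapsed W₁) :
    post g R W₁ = post gU R (post gL (∅ : Set X) W₁) := by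
  have hres : ∀ v : Val X, resetV (∅ : Set X) v = v := by
    intro v; funext x; simp [resetV]
  ext w
  constructor
  · rintro ⟨v, hv, hsat, δ, rfl⟩
    obtain ⟨hL, hU⟩ := (hsplit v).mp hsat
    exact ⟨v, ⟨v, hv, hL, 0, by rw [hres]; funext x; simp [delay]⟩, hU, δ, rfl⟩
  · rintro ⟨u, ⟨v, hv, hL, δ', rfl⟩, hU, δ, rfl⟩
    rw [hres] at *
    refine ⟨delay v δ', hW₁ v hv δ', (hsplit _).mpr ⟨?_, hU⟩, δ, rfl⟩
    intro a ha
    have hle : v a.clock ≤ delay v δ' a.clock := le_self_add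
    have := hL a ha
    rcases hgL a ha with h | h <;> rw [h] at this ⊢ <;> simp only [Cmp.sat] at *
    · exact lt_of_lt_of_le this hle
    · exact le_trans this hle
end

section
/- Let G be an adaptive simulation graph for a timed automaton A. Then for every sequence of symbolic transitions (q0, Z0) ⇒ (q1, Z1) ⇒ … ⇒ (q, Z) in which every set Z1, …, Z is nonempty, there exists a non-tentative node of G labeled (q, Z₁*, L₁, U₁) such that Z ⊆ a_{L₁U₁}(Z₁*). -/
/-- An adaptive simulation graph (ASG) for the timed automaton `A`. -/
structure ASG {Q X : Type*} (A : TA Q X) where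
  Node : Type
  st : Node → Q
  zone : Node → Set (Val X)
  Lb : Node → X → Bnd
  Ub : Node → X → Bnd
  init : Node
  tent : Node → Prop
  edge : Node → Node → Prop
  /-- the covering node associated to a tentative node -/
  cov : Node → Node
  /-- every node is reachable from the initial node by edges -/
  reach : ∀ n, Relation.ReflTransGen edge init n
  /-- G1 -/
  g1_st : st init = A.q0
  g1_zone : zone init = Z0 X
  /-- G2: every non-tentative node has all its symbolic successors -/
  g2 : ∀ n, ¬ tent n → ∀ g R q', (st n, g, R, q') ∈ A.trans →
        post g R (zone n) ≠ ∅ →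
        ∃ n', edge n n' ∧ st n' = q' ∧ zone n' = post g R (zone n)
  /-- G2: every edge of the graph arises in this way -/
  g2' : ∀ n n', edge n n' → ¬ tent n ∧
        ∃ g R, (st n, g, R, st n') ∈ A.trans ∧ zone n' = post g R (zone n) ∧
               post g R (zone n) ≠ ∅
  /-- G3 -/
  g3 : ∀ n, tent n → ¬ tent (cov n) ∧ st (cov n) = st n ∧
        zone n ⊆ aLU (Lb (cov n)) (Ub (cov n)) (zone (cov n))
  /-- I1 -/
  i1 : ∀ n g R q', (st n, g, R, q') ∈ A.trans → post g R (zone n) = ∅ →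
        post g R (aLU (Lb n) (Ub n) (zone n)) = ∅
  /-- I2 -/
  i2 : ∀ n n', edge n n' → ∀ g R, (st n, g, R, st n') ∈ A.trans →
        zone n' = post g R (zone n) →
        post g R (aLU (Lb n) (Ub n) (zone n)) ⊆ aLU (Lb n') (Ub n') (zone n')
  /-- I3 -/
  i3 : ∀ n, tent n → ∀ x, Lb (cov n) x ≤ Lb n x ∧ Ub (cov n) x ≤ Ub n x

lemma luLe_refl' {X : Type*} (L U : X → Bnd) (v : Val X) : luLe L U v v := by
  intro x
  exact ⟨fun h => absurd h (lt_irrefl _), fun h => absurd h (lt_irrefl _)⟩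

lemma ltVal_mono {b b' : Bnd} {r : NNReal} (hb : b' ≤ b) (h : Bnd.ltVal b r) :
    Bnd.ltVal b' r := by
  intro n hn
  subst hn
  cases b with
  | none => exact absurd (le_bot_iff.mp hb) (by simp)
  | some m =>
    have hnm : n ≤ m := WithBot.coe_le_coe.mp hb
    have := h m rfl
    calc (n : NNReal) ≤ (m : NNReal) := by exact_mod_cast hnm
    _ < r := this

lemma ltVal_le {b : Bnd} {r r' : NNReal} (h : Bnd.ltVal b r) (hr : r ≤ r') :
    Bnd.ltVal b r' := fun n hn => lt_of_lt_of_le (h n hn) hr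

lemma luLe_trans' {X : Type*} (L U : X → Bnd) {u v w : Val X}
    (h1 : luLe L U u v) (h2 : luLe L U v w) : luLe L U u w := by
  intro x
  obtain ⟨a1, b1⟩ := h1 x
  obtain ⟨a2, b2⟩ := h2 x
  constructor
  · intro h
    rcases lt_or_ge (w x) (v x) with hw | hw
    · exact a2 hw
    · exact ltVal_le (a1 (lt_of_le_of_lt hw h)) hw
  · intro h
    rcases lt_or_ge (u x) (v x) with hv | hv
    · exact b1 hv
    · exact ltVal_le (b2 (lt_of_le_of_lt hv h)) hv

lemma luLe_mono' {X : Type*} {L U L' U' : X → Bnd}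
    (hL : ∀ x, L' x ≤ L x) (hU : ∀ x, U' x ≤ U x)
    {v v' : Val X} (h : luLe L U v v') : luLe L' U' v v' := by
  intro x
  obtain ⟨a, b⟩ := h x
  exact ⟨fun hlt => ltVal_mono (hL x) (a hlt), fun hlt => ltVal_mono (hU x) (b hlt)⟩

lemma post_mono' {X : Type*} (g : Guard X) (R : Set X) {W W' : Set (Val X)}
    (h : W ⊆ W') : post g R W ⊆ post g R W' := by
  rintro w ⟨v, hv, hg, δ, hδ⟩
  exact ⟨v, h hv, hg, δ, hδ⟩

lemma resolve {Q X : Type*} {A : TA Q X} (G : ASG A) (n : G.Node) {Z : Set (Val X)}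
    (hZ : Z ⊆ aLU (G.Lb n) (G.Ub n) (G.zone n)) :
    ∃ m, ¬ G.tent m ∧ G.st m = G.st n ∧ Z ⊆ aLU (G.Lb m) (G.Ub m) (G.zone m) := by
  by_cases h : G.tent n
  · obtain ⟨hnt, hst, hsub⟩ := G.g3 n h
    refine ⟨G.cov n, hnt, hst, ?_⟩
    intro v hv
    obtain ⟨v', hv', hle⟩ := hZ hv
    obtain ⟨v'', hv'', hle2⟩ := hsub hv'
    have hI := G.i3 n h
    exact ⟨v'', hv'', luLe_trans' _ _
      (luLe_mono' (fun x => (hI x).1) (fun x => (hI x).2) hle) hle2⟩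
  · exact ⟨n, h, rfl, hZ⟩

/-- for every sequence of symbolic transitions from `(q0, Z0)` to `(q, Z)`
in which every intermediate set is nonempty, there is a non-tentative node
`(q, Z₁, L₁, U₁)` of the ASG with `Z ⊆ a_{L₁U₁}(Z₁)`. -/
theorem stmt_1 {Q X : Type*} [Finite Q] [Finite X] (A : TA Q X) (hT : A.trans.Finite)
    (G : ASG A) (q : Q) (Z : Set (Val X))
    (hpath : Relation.ReflTransGen
      (fun p p' => symbStep A p p' ∧ p'.2 ≠ (∅ : Set (Val X))) (A.q0, Z0 X) (q, Z)) :
    ∃ n : G.Node, ¬ G.tent n ∧ G.st n = q ∧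
      Z ⊆ aLU (G.Lb n) (G.Ub n) (G.zone n) := by
  suffices h : ∀ p : Q × Set (Val X),
      Relation.ReflTransGen
        (fun p p' => symbStep A p p' ∧ p'.2 ≠ (∅ : Set (Val X))) (A.q0, Z0 X) p →
      ∃ n : G.Node, ¬ G.tent n ∧ G.st n = p.1 ∧
        p.2 ⊆ aLU (G.Lb n) (G.Ub n) (G.zone n) from h (q, Z) hpath
  intro p hp
  induction hp with
  | refl =>
    have hZ0 : (Z0 X : Set (Val X)) ⊆ aLU (G.Lb G.init) (G.Ub G.init) (G.zone G.init) := by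
      intro v hv
      exact ⟨v, G.g1_zone ▸ hv, luLe_refl' _ _ v⟩
    obtain ⟨m, hmt, hms, hmz⟩ := resolve G G.init hZ0
    exact ⟨m, hmt, hms.trans G.g1_st, hmz⟩
  | @tail b c hstep hr ih =>
    obtain ⟨⟨g, R, htr, hpost⟩, hne⟩ := hr
    obtain ⟨n, hnt, hns, hnz⟩ := ih
    have hsub2 : c.2 ⊆ post g R (aLU (G.Lb n) (G.Ub n) (G.zone n)) := by
      rw [hpost]; exact post_mono' g R hnz
    have htr' : (G.st n, g, R, c.1) ∈ A.trans := by rw [hns]; exact htr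
    have hne' : post g R (G.zone n) ≠ ∅ := by
      intro h0
      have := G.i1 n g R c.1 htr' h0
      apply hne
      rw [this] at hsub2
      exact Set.subset_eq_empty hsub2 rfl
    obtain ⟨n', hedge, hst', hzone'⟩ := G.g2 n hnt g R c.1 htr' hne'
    have hI2 := G.i2 n n' hedge g R (hst' ▸ htr') hzone'
    have hc2 : c.2 ⊆ aLU (G.Lb n') (G.Ub n') (G.zone n') := fun v hv => hI2 (hsub2 hv)
    obtain ⟨m, hmt, hms, hmz⟩ := resolve G n' hc2
    exact ⟨m, hmt, hms.trans hst', hmz⟩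
end

section
/- Let A be a timed automaton and ≼ a preorder on valuations whose lift to configurations is a time-abstract simulation for A, with associated abstraction a and abstract transition relation ⇒_a. Then for every state q, A has a run reaching state q if and only if there is an abstract run (q0, a(Z0)) ⇒_a (q1, W1) ⇒_a … ⇒_a (q, W) with W ≠ ∅ (taking the empty sequence of transitions when q = q0). -/
lemma delay_zero' {X : Type*} (v : Val X) : delay v 0 = v :=
  funext fun x => add_zero _

lemma delay_delay' {X : Type*} (v : Val X) (a b : NNReal) :
    delay (delay v a) b = delay v (a + b) :=
  funext fun x => by simp [delay, add_assoc]

lemma aAbs_idem {X : Type*} (pre : Val X → Val X → Prop)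
    (hrefl : ∀ v, pre v v) (htrans : ∀ u v w, pre u v → pre v w → pre u w)
    (W : Set (Val X)) : aAbs pre (aAbs pre W) = aAbs pre W := by
  ext v
  constructor
  · rintro ⟨u, ⟨w, hw, huw⟩, hvu⟩
    exact ⟨w, hw, htrans _ _ _ hvu huw⟩
  · rintro ⟨u, hu, hvu⟩
    exact ⟨u, ⟨u, hu, hrefl u⟩, hvu⟩

/-- for a preorder `≼` on valuations whose lift is a time-abstract
simulation for `A`, `A` has a run reaching `q` iff there is an abstract run from
`(q0, a(Z0))` to `(q, W)` with `W ≠ ∅`. -/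
theorem stmt_3 {Q X : Type*} [Finite Q] [Finite X] (A : TA Q X) (hT : A.trans.Finite)
    (pre : Val X → Val X → Prop)
    (hrefl : ∀ v, pre v v) (htrans : ∀ u v w, pre u v → pre v w → pre u w)
    (hsim : IsTASim A (fun c c' => c.1 = c'.1 ∧ pre c.2 c'.2)) (q : Q) :
    (∃ v : Val X, Reach A (A.q0, zeroVal X) (q, v)) ↔
    (∃ W : Set (Val X),
      Relation.ReflTransGen (absStep A pre) (A.q0, aAbs pre (Z0 X)) (q, W) ∧
      W ≠ (∅ : Set (Val X))) := by
  constructor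
  · rintro ⟨v, hv⟩
    suffices h : ∀ c, Reach A (A.q0, zeroVal X) c → ∃ W : Set (Val X),
        c.2 ∈ W ∧ TimeElapsed W ∧
        Relation.ReflTransGen (absStep A pre) (A.q0, aAbs pre (Z0 X)) (c.1, aAbs pre W) by
      obtain ⟨W, hvW, _, hrtg⟩ := h _ hv
      exact ⟨aAbs pre W, hrtg, Set.Nonempty.ne_empty ⟨v, ⟨v, hvW, hrefl v⟩⟩⟩
    intro c h
    induction h with
    | refl =>
      refine ⟨Z0 X, ⟨0, (delay_zero' _).symm⟩, ?_, Relation.ReflTransGen.refl⟩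
      rintro u ⟨δ, rfl⟩ δ'
      exact ⟨δ + δ', delay_delay' _ _ _⟩
    | @tail b c hab hbc ih =>
      obtain ⟨W, hbW, hTE, hrtg⟩ := ih
      rcases hbc with ⟨hq, δ, hd⟩ | ⟨g, R, ht, hsat, hres⟩
      · refine ⟨W, ?_, hTE, ?_⟩
        · rw [hd]; exact hTE _ hbW δ
        · rw [hq]; exact hrtg
      · refine ⟨post g R (aAbs pre W), ?_, ?_, ?_⟩
        · exact ⟨b.2, ⟨b.2, hbW, hrefl b.2⟩, hsat, 0, by rw [hres, delay_zero']⟩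
        · rintro w ⟨u, hu, hgu, δ, rfl⟩ δ'
          exact ⟨u, hu, hgu, δ + δ', delay_delay' _ _ _⟩
        · refine hrtg.tail ⟨(aAbs_idem pre hrefl htrans W).symm,
            post g R (aAbs pre W), ⟨g, R, ht, rfl⟩, rfl⟩
  · rintro ⟨W, hrtg, hne⟩
    suffices h : ∀ p, Relation.ReflTransGen (absStep A pre) (A.q0, aAbs pre (Z0 X)) p →
        (∀ v ∈ p.2, ∀ (δ : NNReal) (g : Guard X) (R : Set X) (q1 : Q),
          (p.1, g, R, q1) ∈ A.trans → satG (delay v δ) g →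
          ∃ w, pre (resetV R (delay v δ)) w ∧ Reach A (A.q0, zeroVal X) (q1, w)) ∧
        (p.2.Nonempty → ∃ v, Reach A (A.q0, zeroVal X) (p.1, v)) by
      exact (h _ hrtg).2 (Set.nonempty_iff_ne_empty.mpr hne)
    intro p hp
    induction hp with
    | refl =>
      constructor
      · rintro v ⟨v', ⟨δ₀, rfl⟩, hvv'⟩ δ g R q1 ht hg
        obtain ⟨δ', hg', _, hpre⟩ :=
          hsim.2 A.q0 v (delay (zeroVal X) δ₀) δ g R q1 ⟨rfl, hvv'⟩ ht hg
        refine ⟨resetV R (delay (delay (zeroVal X) δ₀) δ'), hpre, ?_⟩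
        have s1 : step A (A.q0, zeroVal X) (A.q0, delay (zeroVal X) δ₀) :=
          Or.inl ⟨rfl, δ₀, rfl⟩
        have s2 : step A (A.q0, delay (zeroVal X) δ₀)
            (A.q0, delay (delay (zeroVal X) δ₀) δ') := Or.inl ⟨rfl, δ', rfl⟩
        have s3 : step A (A.q0, delay (delay (zeroVal X) δ₀) δ')
            (q1, resetV R (delay (delay (zeroVal X) δ₀) δ')) :=
          Or.inr ⟨g, R, ht, hg', rfl⟩
        exact ((Relation.ReflTransGen.single s1).tail s2).tail s3
      · intro _
        exact ⟨zeroVal X, Relation.ReflTransGen.refl⟩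
    | @tail b c hab hbc ih =>
      obtain ⟨hside, W', ⟨g, R, ht, hW'⟩, hc2⟩ := hbc
      replace hW' : W' = post g R b.2 := hW'
      replace ht : (b.1, g, R, c.1) ∈ A.trans := ht
      constructor
      · intro v hv δ g₂ R₂ q₂ ht₂ hg₂
        rw [hc2, hW'] at hv
        obtain ⟨w₀, ⟨u, huN, hug, δ₀, rfl⟩, hvw₀⟩ := hv
        -- step from u via (g, R) with zero delay
        obtain ⟨w₁, hpre₁, hreach₁⟩ := ih.1 u huN 0 g R c.1 ht (by rwa [delay_zero'])
        rw [delay_zero'] at hpre₁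
        -- simulate (v, w₀) on transition t₂
        obtain ⟨δ', hg', _, hpre₂⟩ :=
          hsim.2 c.1 v (delay (resetV R u) δ₀) δ g₂ R₂ q₂ ⟨rfl, hvw₀⟩ ht₂ hg₂
        rw [delay_delay'] at hg' hpre₂
        -- simulate (resetV R u, w₁) on transition t₂
        obtain ⟨δ'', hg'', _, hpre₃⟩ :=
          hsim.2 c.1 (resetV R u) w₁ (δ₀ + δ') g₂ R₂ q₂ ⟨rfl, hpre₁⟩ ht₂ hg'
        refine ⟨resetV R₂ (delay w₁ δ''), htrans _ _ _ hpre₂ hpre₃, ?_⟩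
        have s1 : step A (c.1, w₁) (c.1, delay w₁ δ'') := Or.inl ⟨rfl, δ'', rfl⟩
        have s2 : step A (c.1, delay w₁ δ'') (q₂, resetV R₂ (delay w₁ δ'')) :=
          Or.inr ⟨g₂, R₂, ht₂, hg'', rfl⟩
        exact (hreach₁.tail s1).tail s2
      · intro hne'
        obtain ⟨v, hv⟩ := hne'
        rw [hc2, hW'] at hv
        obtain ⟨w₀, ⟨u, huN, hug, δ₀, rfl⟩, _⟩ := hv
        obtain ⟨w₁, _, hreach₁⟩ := ih.1 u huN 0 g R c.1 ht (by rwa [delay_zero'])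
        exact ⟨w₁, hreach₁⟩
end

section
/- Completeness of the abstract transition relation: let A be a timed automaton and ≼ a preorder on valuations whose lift to configurations is a time-abstract simulation for A, with associated abstraction a and abstract transition relation ⇒_a. If there is a run of A from (q0, 0̄) ending in a configuration (q, v), then there exists a set of valuations W such that v ∈ W and (q0, a(Z0)) ⇒_a^* (q, W). -/
/-- Completeness: if there is a run of `A` from `(q0, 0̄)` ending in
`(q, v)`, then there is `W` with `v ∈ W` and `(q0, a(Z0)) ⇒_a^* (q, W)`. -/
theorem stmt_5 {Q X : Type*} [Finite Q] [Finite X] (A : TA Q X) (hT : A.trans.Finite)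
    (pre : Val X → Val X → Prop)
    (hrefl : ∀ v, pre v v) (htrans : ∀ u v w, pre u v → pre v w → pre u w)
    (hsim : IsTASim A (fun c c' => c.1 = c'.1 ∧ pre c.2 c'.2))
    (q : Q) (v : Val X) (hrun : Reach A (A.q0, zeroVal X) (q, v)) :
    ∃ W : Set (Val X), v ∈ W ∧
      Relation.ReflTransGen (absStep A pre) (A.q0, aAbs pre (Z0 X)) (q, W) := by
  have hidem : ∀ W : Set (Val X), aAbs pre (aAbs pre W) = aAbs pre W := by
    intro W
    ext u
    constructor
    · rintro ⟨v', ⟨w, hw, hvw⟩, huv⟩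
      exact ⟨w, hw, htrans _ _ _ huv hvw⟩
    · rintro ⟨w, hw, huw⟩
      exact ⟨u, ⟨w, hw, huw⟩, hrefl u⟩
  -- strengthen: all time successors of v are in some reachable a-closed node
  suffices h : ∃ W : Set (Val X), (∀ δ, delay v δ ∈ W) ∧ W = aAbs pre W ∧
      Relation.ReflTransGen (absStep A pre) (A.q0, aAbs pre (Z0 X)) (q, W) by
    obtain ⟨W, hmem, _, hreach⟩ := h
    refine ⟨W, ?_, hreach⟩
    have := hmem 0
    have hv : delay v 0 = v := by funext x; simp [delay]
    rwa [hv] at this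
  suffices key : ∀ c : Q × Val X, Reach A (A.q0, zeroVal X) c →
      ∃ W : Set (Val X), (∀ δ, delay c.2 δ ∈ W) ∧ W = aAbs pre W ∧
        Relation.ReflTransGen (absStep A pre) (A.q0, aAbs pre (Z0 X)) (c.1, W) from
    key (q, v) hrun
  intro c hc
  induction hc with
  | refl =>
      refine ⟨aAbs pre (Z0 X), ?_, (hidem _).symm, Relation.ReflTransGen.refl⟩
      intro δ
      exact ⟨delay (zeroVal X) δ, ⟨δ, rfl⟩, hrefl _⟩
  | tail hab hstep ih =>
      rename_i b c
      obtain ⟨W, hmem, hcl, hreach⟩ := ih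
      have hbW : b.2 ∈ W := by
        have := hmem 0
        have hv : delay b.2 0 = b.2 := by funext x; simp [delay]
        rwa [hv] at this
      rcases hstep with ⟨hq, δ0, hd⟩ | ⟨g, R, ht, hg, hres⟩
      · refine ⟨W, ?_, hcl, by rwa [hq]⟩
        intro δ
        have : delay c.2 δ = delay b.2 (δ0 + δ) := by
          funext x; simp [hd, delay, add_assoc]
        rw [this]; exact hmem _
      · refine ⟨aAbs pre (post g R W), ?_, (hidem _).symm, hreach.tail ?_⟩
        · intro δ
          exact ⟨delay (resetV R b.2) δ, ⟨b.2, hbW, hg, δ, rfl⟩, by rw [hres]; exact hrefl _⟩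
        · exact ⟨hcl, post g R W, ⟨g, R, ht, rfl⟩, rfl⟩
end

section
/- Let A be a timed automaton and L, U LU-bound functions such that for every transition (q, g, R, q') ∈ T and every atomic constraint of g: if the constraint is x > c or x ≥ c then c ≤ L(x); if it is x < c or x ≤ c then c ≤ U(x); and if it is x = c then c ≤ L(x) and c ≤ U(x). Then the relation { ((q, v), (q, v')) | q ∈ Q, v ⊑_LU v' } is a time-abstract simulation for A. -/
/-- From `(c : Bnd) ≤ b` and `Bnd.ltVal b r`, conclude `c < r`. -/
lemma bnd_lt_of_le {b : Bnd} {c : ℕ} {r : NNReal}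
    (h : (c : Bnd) ≤ b) (hlt : Bnd.ltVal b r) : (c : NNReal) < r := by
  cases hb : b with
  | none => rw [hb] at h; exact absurd h (WithBot.not_coe_le_bot c)
  | some n =>
      rw [hb] at h
      have hcn : c ≤ n := WithBot.coe_le_coe.mp h
      calc (c : NNReal) ≤ (n : NNReal) := by exact_mod_cast hcn
        _ < r := hlt n hb

/-- LU-preorder is preserved by equal delay. -/
lemma luLe_delay {X : Type*} {L U : X → Bnd} {v v' : Val X} (h : luLe L U v v')
    (δ : NNReal) : luLe L U (delay v δ) (delay v' δ) := by
  intro x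
  refine ⟨fun hlt => ?_, fun hlt => ?_⟩
  · have h1 : v' x < v x := by
      have := hlt; simpa [delay] using (add_lt_add_iff_right δ).mp this
    intro n hn
    have := (h x).1 h1 n hn
    calc (n : NNReal) < v' x := this
      _ ≤ delay v' δ x := le_self_add
  · have h1 : v x < v' x := by
      have := hlt; simpa [delay] using (add_lt_add_iff_right δ).mp this
    intro n hn
    have := (h x).2 h1 n hn
    calc (n : NNReal) < v x := this
      _ ≤ delay v δ x := le_self_add

/-- LU-preorder is preserved by reset. -/
lemma luLe_reset {X : Type*} {L U : X → Bnd} {v v' : Val X} (h : luLe L U v v')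
    (R : Set X) : luLe L U (resetV R v) (resetV R v') := by
  intro x
  by_cases hx : x ∈ R
  · simp [resetV, hx]
  · simpa [resetV, hx] using h x

/-- Guard satisfaction transfers along `⊑_LU` when bounds dominate the constants. -/
lemma satG_of_luLe {X : Type*} {L U : X → Bnd} {w w' : Val X} (h : luLe L U w w')
    {g : Guard X}
    (hb : ∀ a ∈ g,
      (a.cmp = Cmp.gt ∨ a.cmp = Cmp.ge → (a.bound : Bnd) ≤ L a.clock) ∧
      (a.cmp = Cmp.lt ∨ a.cmp = Cmp.le → (a.bound : Bnd) ≤ U a.clock) ∧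
      (a.cmp = Cmp.eq → (a.bound : Bnd) ≤ L a.clock ∧ (a.bound : Bnd) ≤ U a.clock))
    (hw : satG w g) : satG w' g := by
  intro a ha
  have hsat := hw a ha
  obtain ⟨hbL, hbU, hbE⟩ := hb a ha
  set x := a.clock
  set c := a.bound
  cases hc : a.cmp with
  | gt =>
      rw [hc] at hsat
      simp only [Cmp.sat] at hsat ⊢
      rcases lt_or_ge (w' x) (w x) with hlt | hle
      · exact bnd_lt_of_le (hbL (Or.inl hc)) ((h x).1 hlt)
      · exact lt_of_lt_of_le hsat hle
  | ge =>
      rw [hc] at hsat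
      simp only [Cmp.sat] at hsat ⊢
      rcases lt_or_ge (w' x) (w x) with hlt | hle
      · exact le_of_lt (bnd_lt_of_le (hbL (Or.inr hc)) ((h x).1 hlt))
      · exact le_trans hsat hle
  | lt =>
      rw [hc] at hsat
      simp only [Cmp.sat] at hsat ⊢
      rcases lt_or_ge (w x) (w' x) with hlt | hle
      · exact absurd (bnd_lt_of_le (hbU (Or.inl hc)) ((h x).2 hlt)) (not_lt.mpr hsat.le)
      · exact lt_of_le_of_lt hle hsat
  | le =>
      rw [hc] at hsat
      simp only [Cmp.sat] at hsat ⊢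
      rcases lt_or_ge (w x) (w' x) with hlt | hle
      · exact absurd (bnd_lt_of_le (hbU (Or.inr hc)) ((h x).2 hlt))
          (not_lt.mpr hsat)
      · exact le_trans hle hsat
  | eq =>
      rw [hc] at hsat
      simp only [Cmp.sat] at hsat ⊢
      rcases lt_trichotomy (w' x) (w x) with hlt | heq | hgt
      · have := bnd_lt_of_le (hbE hc).1 ((h x).1 hlt)
        exact absurd (this.trans (hsat ▸ hlt)) (lt_irrefl _)
      · rw [← heq] at hsat; exact hsat
      · have := bnd_lt_of_le (hbE hc).2 ((h x).2 hgt)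
        rw [hsat] at this
        exact absurd this (lt_irrefl _)

/-- if `L, U` dominate all constants of the corresponding kinds of
atomic constraints appearing in guards of `A`, then the lift of `⊑_LU` is a
time-abstract simulation for `A`. -/
theorem stmt_7 {Q X : Type*} [Finite Q] [Finite X] (A : TA Q X) (hT : A.trans.Finite)
    (L U : X → Bnd)
    (hbounds : ∀ q g R q', (q, g, R, q') ∈ A.trans → ∀ a ∈ g,
      (a.cmp = Cmp.gt ∨ a.cmp = Cmp.ge → (a.bound : Bnd) ≤ L a.clock) ∧
      (a.cmp = Cmp.lt ∨ a.cmp = Cmp.le → (a.bound : Bnd) ≤ U a.clock) ∧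
      (a.cmp = Cmp.eq → (a.bound : Bnd) ≤ L a.clock ∧ (a.bound : Bnd) ≤ U a.clock)) :
    IsTASim A (fun c c' => c.1 = c'.1 ∧ luLe L U c.2 c'.2) := by
  constructor
  · intro c c' h; exact h.1
  · intro q v v' δ g R q1 hS htr hsat
    have hlu : luLe L U (delay v δ) (delay v' δ) := luLe_delay hS.2 δ
    refine ⟨δ, satG_of_luLe hlu (hbounds q g R q1 htr) hsat, rfl, luLe_reset hlu R⟩
end

section
/- Let g be a guard, Z a set of valuations, Z' = Post_{g,∅}(Z), and let L', U' and L_new, U_new be LU-bound functions with L'(x) ≤ L_new(x) and U'(x) ≤ U_new(x) for every clock x. If ⟦g⟧ ⊆ a_{L'U'}(Z'), where ⟦g⟧ = { v | v ⊨ g }, then Post_{g,∅}(a_{L_newU_new}(Z)) ⊆ a_{L'U'}(Z'). -/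
/-- if `⟦g⟧ ⊆ a_{L'U'}(Z')`, the guard need not be incorporated:
`Post_{g,∅}(a_{L_newU_new}(Z)) ⊆ a_{L'U'}(Z')`. -/
theorem stmt_10 {X : Type*} [Finite X] (g : Guard X) (Z : Set (Val X))
    (L' U' Lnew Unew : X → Bnd)
    (hL : ∀ x, L' x ≤ Lnew x) (hU : ∀ x, U' x ≤ Unew x)
    (hg : { v : Val X | satG v g } ⊆ aLU L' U' (post g (∅ : Set X) Z)) :
    post g (∅ : Set X) (aLU Lnew Unew Z) ⊆ aLU L' U' (post g (∅ : Set X) Z) := by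
  rintro w ⟨v, hv, hsat, δ, rfl⟩
  obtain ⟨v', ⟨u, hu, hug, δ', rfl⟩, hle⟩ := hg hsat
  refine ⟨delay (delay (resetV ∅ u) δ') δ, ⟨u, hu, hug, δ' + δ, ?_⟩, ?_⟩
  · funext x; simp [delay, add_assoc]
  · intro x
    have hres : resetV (∅ : Set X) v x = v x := by simp [resetV]
    constructor
    · intro h n hn
      have h' : delay (resetV ∅ u) δ' x < v x := by
        simpa [delay, hres] using (add_lt_add_iff_right δ).mp (by simpa [delay, hres] using h)
      have := (hle x).1 h' n hn
      calc (n : NNReal) < delay (resetV ∅ u) δ' x := this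
        _ ≤ delay (delay (resetV ∅ u) δ') δ x := by simp [delay]
    · intro h n hn
      have h' : v x < delay (resetV ∅ u) δ' x := by
        simpa [delay, hres] using (add_lt_add_iff_right δ).mp (by simpa [delay, hres] using h)
      have := (hle x).2 h' n hn
      calc (n : NNReal) < v x := this
        _ ≤ delay (resetV ∅ v) δ x := by simp [delay, hres]
end

section
/- The LU-preorder is compatible with equal time delays: if v ⊑_LU v' then v+δ ⊑_LU v'+δ for every δ ∈ ℝ≥0. Consequently, if a set W of valuations is time-elapsed, then a_LU(W) is time-elapsed. -/
/-- `⊑_LU` is compatible with equal time delays, and `a_LU` preserves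
time-elapsed sets. -/
theorem stmt_12 {X : Type*} [Finite X] (L U : X → Bnd) :
    (∀ (v v' : Val X) (δ : NNReal), luLe L U v v' → luLe L U (delay v δ) (delay v' δ)) ∧
    (∀ W : Set (Val X), TimeElapsed W → TimeElapsed (aLU L U W)) := by
  have key : ∀ (v v' : Val X) (δ : NNReal), luLe L U v v' →
      luLe L U (delay v δ) (delay v' δ) := by
    intro v v' δ h x
    have hv := h x
    constructor
    · intro hlt n hn
      have h1 : v' x < v x := by
        simpa [delay] using hlt
      have := hv.1 h1 n hn
      calc (n : NNReal) < v' x := this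
        _ ≤ v' x + δ := le_self_add
    · intro hlt n hn
      have h1 : v x < v' x := by
        simpa [delay] using hlt
      have := hv.2 h1 n hn
      calc (n : NNReal) < v x := this
        _ ≤ v x + δ := le_self_add
  refine ⟨key, ?_⟩
  intro W hW v hv δ
  obtain ⟨v', hv', hle⟩ := hv
  exact ⟨delay v' δ, hW v' hv' δ, key v v' δ hle⟩
end

section
/- Let x be a clock, d ∈ ℕ, ⋖ ∈ {<, ≤}, and let L, U be LU-bound functions with U(x) ≥ d. If no valuation v' in a set Z satisfies v'(x) ⋖ d, then no valuation v ∈ a_LU(Z) satisfies v(x) ⋖ d. -/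
/-- if `U(x) ≥ d` and no valuation of `Z` satisfies the upper-bound
constraint `x ⋖ d`, then no valuation of `a_LU(Z)` satisfies it either. -/
theorem stmt_15 {X : Type*} [Finite X] (x : X) (d : ℕ) (c : Cmp)
    (hc : c = Cmp.lt ∨ c = Cmp.le) (L U : X → Bnd) (hU : (d : Bnd) ≤ U x)
    (Z : Set (Val X)) (h : ∀ v' ∈ Z, ¬ c.sat (v' x) d) :
    ∀ v ∈ aLU L U Z, ¬ c.sat (v x) d := by
  rintro v ⟨v', hv', hle⟩ hsat
  -- U x is some natural n ≥ d
  obtain ⟨n, hn, hdn⟩ : ∃ n : ℕ, U x = (n : Bnd) ∧ d ≤ n := by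
    cases hUx : U x with
    | none => rw [hUx] at hU; exact absurd hU (not_le.mpr (WithBot.bot_lt_coe d))
    | some n =>
      refine ⟨n, rfl, ?_⟩
      rw [hUx] at hU; exact WithBot.coe_le_coe.mp hU
  have hvlt : v x < v' x := by
    have hv'x : ¬ c.sat (v' x) d := h v' hv'
    rcases hc with rfl | rfl
    · simp [Cmp.sat] at hsat hv'x; exact lt_of_lt_of_le hsat hv'x
    · simp [Cmp.sat] at hsat hv'x; exact lt_of_le_of_lt hsat hv'x
  have := (hle x).2 hvlt n hn
  have hdv : (d : NNReal) ≤ v x :=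
    le_trans (by exact_mod_cast hdn) this.le
  rcases hc with rfl | rfl
  · exact absurd hsat (not_lt.mpr hdv)
  · exact absurd (le_trans hsat (by exact_mod_cast hdn : (d:NNReal) ≤ n)) (not_le.mpr this)
end

section
/- Let Z be a zone and let g be a finite conjunction of upper-bound atomic constraints x₁ ⋖₁ d₁, …, x_k ⋖_k d_k (each ⋖ᵢ ∈ {<, ≤}, dᵢ ∈ ℕ). If no valuation in Z satisfies all of these constraints, then there exists an index i such that no valuation in Z satisfies xᵢ ⋖ᵢ dᵢ. -/
/-- Satisfaction of `a ∼ c` over the reals with an integer constant. -/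
def Cmp.satR : Cmp → ℝ → ℤ → Prop
  | .lt, a, c => a < (c : ℝ)
  | .le, a, c => a ≤ (c : ℝ)
  | .eq, a, c => a = (c : ℝ)
  | .ge, a, c => (c : ℝ) ≤ a
  | .gt, a, c => (c : ℝ) < a

/-- A zone constraint: `x ∼ c` or `x − y ∼ c` with `c ∈ ℤ`. -/
inductive ZClause (X : Type*) where
  | single (x : X) (c : Cmp) (k : ℤ)
  | diag (x y : X) (c : Cmp) (k : ℤ)

def ZClause.holds {X : Type*} (v : Val X) : ZClause X → Prop
  | .single x c k => c.satR (v x : ℝ) k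
  | .diag x y c k => c.satR ((v x : ℝ) - (v y : ℝ)) k

/-- A zone is a set of valuations definable by a finite conjunction of zone constraints. -/
def IsZone {X : Type*} (Z : Set (Val X)) : Prop :=
  ∃ l : List (ZClause X), Z = { v | ∀ cl ∈ l, cl.holds v }

lemma real_min_sub_le {a b a' b' k : ℝ} (h1 : a - a' ≤ k) (h2 : b - b' ≤ k) :
    min a b - min a' b' ≤ k := by
  rcases le_total a' b' with h | h
  · rw [min_eq_left h]; have := min_le_left a b; linarith
  · rw [min_eq_right h]; have := min_le_right a b; linarith

lemma real_min_sub_lt {a b a' b' k : ℝ} (h1 : a - a' < k) (h2 : b - b' < k) :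
    min a b - min a' b' < k := by
  rcases le_total a' b' with h | h
  · rw [min_eq_left h]; have := min_le_left a b; linarith
  · rw [min_eq_right h]; have := min_le_right a b; linarith

lemma real_min_sub_ge {a b a' b' k : ℝ} (h1 : k ≤ a - a') (h2 : k ≤ b - b') :
    k ≤ min a b - min a' b' := by
  rcases le_total a b with h | h
  · rw [min_eq_left h]; have := min_le_left a' b'; linarith
  · rw [min_eq_right h]; have := min_le_right a' b'; linarith

lemma real_min_sub_gt {a b a' b' k : ℝ} (h1 : k < a - a') (h2 : k < b - b') :
    k < min a b - min a' b' := by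
  rcases le_total a b with h | h
  · rw [min_eq_left h]; have := min_le_left a' b'; linarith
  · rw [min_eq_right h]; have := min_le_right a' b'; linarith

lemma clause_inf {X : Type*} (cl : ZClause X) (v w : Val X) (hv : cl.holds v)
    (hw : cl.holds w) : cl.holds (v ⊓ w) := by
  have key : ∀ x : X, ((v ⊓ w) x : ℝ) = min ((v x : ℝ)) ((w x : ℝ)) := by
    intro x
    show (((v x ⊓ w x : NNReal)) : ℝ) = _
    exact_mod_cast NNReal.coe_min (v x) (w x)
  cases cl with
  | single x c k =>
    cases c <;> simp only [ZClause.holds, Cmp.satR] at hv hw ⊢ <;> rw [key]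
    · exact lt_of_le_of_lt (min_le_left _ _) hv
    · exact le_trans (min_le_left _ _) hv
    · rw [hv, hw, min_self]
    · exact le_min hv hw
    · exact lt_min hv hw
  | diag x y c k =>
    cases c <;> simp only [ZClause.holds, Cmp.satR] at hv hw ⊢ <;> rw [key, key]
    · exact real_min_sub_lt hv hw
    · exact real_min_sub_le hv hw
    · exact le_antisymm (real_min_sub_le hv.le hw.le) (real_min_sub_ge hv.ge hw.ge)
    · exact real_min_sub_ge hv hw
    · exact real_min_sub_gt hv hw

/-- if no valuation of a zone satisfies a conjunction of upper-bound
constraints `x₁ ⋖₁ d₁, …, x_k ⋖_k d_k`, then some single constraint is satisfied by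
no valuation of the zone. -/
theorem stmt_16 {X : Type*} [Finite X] (Z : Set (Val X)) (hZ : IsZone Z)
    (k : ℕ) (hk : 0 < k) (xs : Fin k → X) (cs : Fin k → Cmp)
    (hcs : ∀ i, cs i = Cmp.lt ∨ cs i = Cmp.le) (ds : Fin k → ℕ)
    (h : ¬ ∃ v ∈ Z, ∀ i, (cs i).sat (v (xs i)) (ds i)) :
    ∃ i, ∀ v ∈ Z, ¬ (cs i).sat (v (xs i)) (ds i) := by
  by_contra hcon
  push_neg at hcon
  choose f hfZ hfs using hcon
  obtain ⟨l, hl⟩ := hZ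
  haveI : Nonempty (Fin k) := Fin.pos_iff_nonempty.mp hk
  have hne : (Finset.univ : Finset (Fin k)).Nonempty := Finset.univ_nonempty
  have hclosed : ∀ v ∈ Z, ∀ w ∈ Z, v ⊓ w ∈ Z := by
    intro v hv w hw
    rw [hl] at hv hw ⊢
    exact fun cl hcl => clause_inf cl v w (hv cl hcl) (hw cl hcl)
  have hvZ : Finset.univ.inf' hne f ∈ Z :=
    Finset.inf'_mem Z hclosed _ hne f (fun i _ => hfZ i)
  apply h
  refine ⟨Finset.univ.inf' hne f, hvZ, fun i => ?_⟩
  have hle : Finset.univ.inf' hne f (xs i) ≤ f i (xs i) :=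
    Finset.inf'_le f (Finset.mem_univ i) (xs i)
  rcases hcs i with hc | hc <;> rw [hc] <;> have := hfs i <;> rw [hc] at this <;>
    simp only [Cmp.sat] at this ⊢
  · exact lt_of_le_of_lt hle this
  · exact le_trans hle this
end
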